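/- Every PDLsf[Loop] path formula π is monotone: for all MSCs M over P and Σ and events e, f with e ≤proc f such that ⟦π⟧_M(e) and ⟦π⟧_M(f) are both nonempty, one has min_π(e) ≤proc min_π(f) and max_π(e) ≤proc max_π(f). -/

import Mathlib

set_option maxHeartbeats 1000000

/-! ## Message sequence charts -/

/-- A message sequence chart (MSC) over processes `P` and labels `Lab`.
Events are natural numbers; `E` is the finite nonempty set of events. -/
structure MSC (P : Type) (Lab : Type) where
  /-- the finite set of events -/
  E : Finset ℕ
  nonemptyE : E.Nonempty
  /-- process edges `→` (direct successor on a process) -/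
  proc : ℕ → ℕ → Prop
  /-- message edges `◁` -/
  msg : ℕ → ℕ → Prop
  /-- location (process) of each event -/
  loc : ℕ → P
  /-- label of each event -/
  lab : ℕ → Lab
  proc_mem : ∀ e f, proc e f → e ∈ E ∧ f ∈ E
  msg_mem : ∀ e f, msg e f → e ∈ E ∧ f ∈ E
  proc_loc : ∀ e f, proc e f → loc e = loc f
  msg_loc : ∀ e f, msg e f → loc e ≠ loc f
  /-- on each process, any two events are comparable w.r.t. `→⁺` -/
  proc_total : ∀ e f, e ∈ E → f ∈ E → loc e = loc f →
    e = f ∨ Relation.TransGen proc e f ∨ Relation.TransGen proc f e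
  /-- `→` is the direct-successor (covering) relation of the order `→⁺` -/
  proc_cover : ∀ e f, proc e f →
    ¬ ∃ g, Relation.TransGen proc e g ∧ Relation.TransGen proc g f
  /-- every event belongs to at most one message edge -/
  msg_once : ∀ e f e' f', msg e f → msg e' f' →
    (e = e' ∨ e = f' ∨ f = e' ∨ f = f') → e = e' ∧ f = f'
  /-- FIFO condition -/
  fifo : ∀ e f e' f', msg e f → msg e' f' → loc e = loc e' → loc f = loc f' →
    (Relation.ReflTransGen proc e e' ↔ Relation.ReflTransGen proc f f')
  /-- `→ ∪ ◁` is acyclic -/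
  acyclic : ∀ e, ¬ Relation.TransGen (fun a b => proc a b ∨ msg a b) e e

namespace MSC

variable {P Lab : Type}

/-- `≤proc`, the reflexive transitive closure of `→`. -/
def procLe (M : MSC P Lab) : ℕ → ℕ → Prop := Relation.ReflTransGen M.proc

/-- `<proc`, the transitive closure of `→`. -/
def procLt (M : MSC P Lab) : ℕ → ℕ → Prop := Relation.TransGen M.proc

/-- the happened-before relation `≤ = (→ ∪ ◁)*`. -/
def hb (M : MSC P Lab) : ℕ → ℕ → Prop :=
  Relation.ReflTransGen (fun a b => M.proc a b ∨ M.msg a b)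

/-- Relabelling an MSC (same events and edges, new labelling). -/
def relabel {Γ : Type} (M : MSC P Lab) (γ : ℕ → Γ) : MSC P Γ where
  E := M.E
  nonemptyE := M.nonemptyE
  proc := M.proc
  msg := M.msg
  loc := M.loc
  lab := γ
  proc_mem := M.proc_mem
  msg_mem := M.msg_mem
  proc_loc := M.proc_loc
  msg_loc := M.msg_loc
  proc_total := M.proc_total
  proc_cover := M.proc_cover
  msg_once := M.msg_once
  fifo := M.fifo
  acyclic := M.acyclic

end MSC

/-! ## Star-free PDL -/

mutual
/-- Event formulas of star-free PDL. -/
inductive EF (P Lab : Type) : Type where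
  | proc : P → EF P Lab
  | lab : Lab → EF P Lab
  | or : EF P Lab → EF P Lab → EF P Lab
  | not : EF P Lab → EF P Lab
  | dia : PF P Lab → EF P Lab → EF P Lab
  | loop : PF P Lab → EF P Lab
/-- Path formulas of star-free PDL. -/
inductive PF (P Lab : Type) : Type where
  | next : PF P Lab
  | prev : PF P Lab
  | msg : P → P → PF P Lab
  | msgInv : P → P → PF P Lab
  | nextG : EF P Lab → PF P Lab
  | prevG : EF P Lab → PF P Lab
  | jump : P → P → PF P Lab
  | test : EF P Lab → PF P Lab
  | comp : PF P Lab → PF P Lab → PF P Lab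
  | union : PF P Lab → PF P Lab → PF P Lab
  | inter : PF P Lab → PF P Lab → PF P Lab
  | compl : PF P Lab → PF P Lab
end

mutual
/-- Satisfaction of event formulas at an event. -/
def EF.sat {P Lab : Type} (M : MSC P Lab) : EF P Lab → ℕ → Prop
  | .proc p, e => e ∈ M.E ∧ M.loc e = p
  | .lab a, e => e ∈ M.E ∧ M.lab e = a
  | .or φ ψ, e => EF.sat M φ e ∨ EF.sat M ψ e
  | .not φ, e => e ∈ M.E ∧ ¬ EF.sat M φ e
  | .dia π φ, e => ∃ f, PF.sem M π e f ∧ EF.sat M φ f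
  | .loop π, e => PF.sem M π e e
/-- Semantics of path formulas as binary relations on events. -/
def PF.sem {P Lab : Type} (M : MSC P Lab) : PF P Lab → ℕ → ℕ → Prop
  | .next, e, f => M.proc e f
  | .prev, e, f => M.proc f e
  | .msg p q, e, f => M.msg e f ∧ M.loc e = p ∧ M.loc f = q
  | .msgInv p q, e, f => M.msg f e ∧ M.loc f = p ∧ M.loc e = q
  | .nextG φ, e, f => M.procLt e f ∧ ∀ g, M.procLt e g → M.procLt g f → EF.sat M φ g
  | .prevG φ, e, f => M.procLt f e ∧ ∀ g, M.procLt f g → M.procLt g e → EF.sat M φ g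
  | .jump p r, e, f => e ∈ M.E ∧ f ∈ M.E ∧ M.loc e = p ∧ M.loc f = r
  | .test φ, e, f => e = f ∧ EF.sat M φ e
  | .comp π₁ π₂, e, f => ∃ g, PF.sem M π₁ e g ∧ PF.sem M π₂ g f
  | .union π₁ π₂, e, f => PF.sem M π₁ e f ∨ PF.sem M π₂ e f
  | .inter π₁ π₂, e, f => PF.sem M π₁ e f ∧ PF.sem M π₂ e f
  | .compl π, e, f => e ∈ M.E ∧ f ∈ M.E ∧ ¬ PF.sem M π e f
end

/-- Sentences of star-free PDL. -/
inductive PDLS (P Lab : Type) : Type where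
  | ex : EF P Lab → PDLS P Lab
  | or : PDLS P Lab → PDLS P Lab → PDLS P Lab
  | not : PDLS P Lab → PDLS P Lab

/-- Satisfaction of PDL sentences. -/
def PDLS.sat {P Lab : Type} (M : MSC P Lab) : PDLS P Lab → Prop
  | .ex φ => ∃ e ∈ M.E, EF.sat M φ e
  | .or ξ ζ => PDLS.sat M ξ ∨ PDLS.sat M ζ
  | .not ξ => ¬ PDLS.sat M ξ

/-- The four optional operators of star-free PDL. -/
inductive PDLOp : Type where
  | loop | union | inter | compl
deriving DecidableEq

mutual
/-- `EF.inFrag R φ` : the event formula `φ` belongs to the fragment `PDLsf[R]`. -/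
def EF.inFrag {P Lab : Type} (R : Set PDLOp) : EF P Lab → Prop
  | .proc _ => True
  | .lab _ => True
  | .or φ ψ => EF.inFrag R φ ∧ EF.inFrag R ψ
  | .not φ => EF.inFrag R φ
  | .dia π φ => PF.inFrag R π ∧ EF.inFrag R φ
  | .loop π => PDLOp.loop ∈ R ∧ PF.inFrag R π
/-- `PF.inFrag R π` : the path formula `π` belongs to the fragment `PDLsf[R]`. -/
def PF.inFrag {P Lab : Type} (R : Set PDLOp) : PF P Lab → Prop
  | .next => True
  | .prev => True
  | .msg _ _ => True
  | .msgInv _ _ => True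
  | .nextG φ => EF.inFrag R φ
  | .prevG φ => EF.inFrag R φ
  | .jump _ _ => True
  | .test φ => EF.inFrag R φ
  | .comp π₁ π₂ => PF.inFrag R π₁ ∧ PF.inFrag R π₂
  | .union π₁ π₂ => PDLOp.union ∈ R ∧ PF.inFrag R π₁ ∧ PF.inFrag R π₂
  | .inter π₁ π₂ => PDLOp.inter ∈ R ∧ PF.inFrag R π₁ ∧ PF.inFrag R π₂
  | .compl π => PDLOp.compl ∈ R ∧ PF.inFrag R π
end

/-- `PDLS.inFrag R ξ` : the sentence `ξ` belongs to the fragment `PDLsf[R]`. -/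
def PDLS.inFrag {P Lab : Type} (R : Set PDLOp) : PDLS P Lab → Prop
  | .ex φ => EF.inFrag R φ
  | .or ξ ζ => PDLS.inFrag R ξ ∧ PDLS.inFrag R ζ
  | .not ξ => PDLS.inFrag R ξ

/-- Conjunction of event formulas (derived operator). -/
def EF.and {P Lab : Type} (φ ψ : EF P Lab) : EF P Lab :=
  .not (.or (.not φ) (.not ψ))

/-- `isMinOf M π e m` : `m` is the `≤proc`-least element of `⟦π⟧_M(e)`
(in particular `⟦π⟧_M(e)` is nonempty). -/
def isMinOf {P Lab : Type} (M : MSC P Lab) (π : PF P Lab) (e m : ℕ) : Prop :=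
  PF.sem M π e m ∧ ∀ f, PF.sem M π e f → M.procLe m f

/-- `isMaxOf M π e m` : `m` is the `≤proc`-greatest element of `⟦π⟧_M(e)`
(in particular `⟦π⟧_M(e)` is nonempty). -/
def isMaxOf {P Lab : Type} (M : MSC P Lab) (π : PF P Lab) (e m : ℕ) : Prop :=
  PF.sem M π e m ∧ ∀ f, PF.sem M π e f → M.procLe f m

/-! ## MSO/FO logic over MSCs -/

/-- Formulas of MSO over MSCs: first-order kernel with atoms `p(x)`, `a(x)`,
`x = y`, `x → y`, `x ◁ y`, `x ≤ y` and additionally `x ∈ X_k` (monadic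
second-order variables, used for the EMSO prefix). -/
inductive FOS (P Lab : Type) : Type where
  | pred : P → ℕ → FOS P Lab
  | lab : Lab → ℕ → FOS P Lab
  | eq : ℕ → ℕ → FOS P Lab
  | edge : ℕ → ℕ → FOS P Lab
  | medge : ℕ → ℕ → FOS P Lab
  | le : ℕ → ℕ → FOS P Lab
  | inSet : ℕ → ℕ → FOS P Lab
  | or : FOS P Lab → FOS P Lab → FOS P Lab
  | not : FOS P Lab → FOS P Lab
  | ex : ℕ → FOS P Lab → FOS P Lab

/-- Satisfaction, with a first-order valuation `ν` and a second-order valuation `σ`.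
First-order quantification ranges over the events of the MSC. -/
def FOS.sat {P Lab : Type} (M : MSC P Lab) : FOS P Lab → (ℕ → ℕ) → (ℕ → Set ℕ) → Prop
  | .pred p x, ν, _ => M.loc (ν x) = p
  | .lab a x, ν, _ => M.lab (ν x) = a
  | .eq x y, ν, _ => ν x = ν y
  | .edge x y, ν, _ => M.proc (ν x) (ν y)
  | .medge x y, ν, _ => M.msg (ν x) (ν y)
  | .le x y, ν, _ => M.hb (ν x) (ν y)
  | .inSet x k, ν, σ => ν x ∈ σ k
  | .or Φ Ψ, ν, σ => FOS.sat M Φ ν σ ∨ FOS.sat M Ψ ν σ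
  | .not Φ, ν, σ => ¬ FOS.sat M Φ ν σ
  | .ex x Φ, ν, σ => ∃ e ∈ M.E, FOS.sat M Φ (Function.update ν x e) σ

/-- Free first-order variables. -/
def FOS.free {P Lab : Type} : FOS P Lab → Finset ℕ
  | .pred _ x => {x}
  | .lab _ x => {x}
  | .eq x y => {x, y}
  | .edge x y => {x, y}
  | .medge x y => {x, y}
  | .le x y => {x, y}
  | .inSet x _ => {x}
  | .or Φ Ψ => FOS.free Φ ∪ FOS.free Ψ
  | .not Φ => FOS.free Φ
  | .ex x Φ => (FOS.free Φ).erase x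

/-- All first-order variables occurring (free or bound). -/
def FOS.vars {P Lab : Type} : FOS P Lab → Finset ℕ
  | .pred _ x => {x}
  | .lab _ x => {x}
  | .eq x y => {x, y}
  | .edge x y => {x, y}
  | .medge x y => {x, y}
  | .le x y => {x, y}
  | .inSet x _ => {x}
  | .or Φ Ψ => FOS.vars Φ ∪ FOS.vars Ψ
  | .not Φ => FOS.vars Φ
  | .ex x Φ => insert x (FOS.vars Φ)

/-- A formula is first-order (`FO[→,◁,≤]`) iff it contains no set atoms. -/
def FOS.noSets {P Lab : Type} : FOS P Lab → Prop
  | .pred _ _ => True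
  | .lab _ _ => True
  | .eq _ _ => True
  | .edge _ _ => True
  | .medge _ _ => True
  | .le _ _ => True
  | .inSet _ _ => False
  | .or Φ Ψ => FOS.noSets Φ ∧ FOS.noSets Ψ
  | .not Φ => FOS.noSets Φ
  | .ex _ Φ => FOS.noSets Φ

/-! ## Communicating finite-state machines -/

/-- Actions of a process: internal `⟨a⟩`, send `!(a,m,q)`, receive `?(a,m,q)`. -/
inductive CAct (P Lab Msg : Type) : Type where
  | int : Lab → CAct P Lab Msg
  | snd : Lab → Msg → P → CAct P Lab Msg
  | rcv : Lab → Msg → P → CAct P Lab Msg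

/-- The label performed by an action. -/
def CAct.label {P Lab Msg : Type} : CAct P Lab Msg → Lab
  | .int a => a
  | .snd a _ _ => a
  | .rcv a _ _ => a

/-- A communicating finite-state machine over `P` and `Lab`. -/
structure CFM (P Lab : Type) where
  /-- states -/
  S : Type
  finS : Fintype S
  /-- messages -/
  Msg : Type
  finMsg : Fintype Msg
  /-- initial state of each process -/
  ι : P → S
  /-- transition relation of each process -/
  Δ : P → S → CAct P Lab Msg → S → Prop
  Δ_snd : ∀ p s a m q s', Δ p s (.snd a m q) s' → q ≠ p
  Δ_rcv : ∀ p s a m q s', Δ p s (.rcv a m q) s' → q ≠ p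
  /-- acceptance condition -/
  Acc : (P → S) → Prop

/-- Existence of an accepting run of a CFM on an MSC. -/
def CFM.Accepts {P Lab : Type} (A : CFM P Lab) (M : MSC P Lab) : Prop :=
  ∃ (src tgt : ℕ → A.S) (act : ℕ → CAct P Lab A.Msg),
    (∀ e ∈ M.E, A.Δ (M.loc e) (src e) (act e) (tgt e)) ∧
    (∀ e ∈ M.E, (act e).label = M.lab e) ∧
    (∀ e ∈ M.E, (¬ ∃ f, M.proc f e) → src e = A.ι (M.loc e)) ∧
    (∀ e f, M.proc e f → tgt e = src f) ∧
    (∀ e ∈ M.E, (¬ ∃ f, M.msg e f) → (¬ ∃ f, M.msg f e) → ∃ a, act e = .int a) ∧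
    (∀ e f, M.msg e f →
      ∃ a a' m, act e = .snd a m (M.loc f) ∧ act f = .rcv a' m (M.loc e)) ∧
    (∃ fin : P → A.S,
      (∀ p, (∀ e ∈ M.E, M.loc e ≠ p) → fin p = A.ι p) ∧
      (∀ e ∈ M.E, (¬ ∃ f, M.proc e f) → fin (M.loc e) = tgt e) ∧
      A.Acc fin)

/-- The language of a CFM. -/
def CFM.lang {P Lab : Type} (A : CFM P Lab) : Set (MSC P Lab) := {M | A.Accepts M}

/-! ## Letter-to-letter MSC transducers -/

/-- The relation accepted by a letter-to-letter MSC transducer from `Lab` to `Γ`,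
i.e., a CFM over `P` and `Lab × Γ`. -/
def Ltrans {P Lab Γ : Type} (A : CFM P (Lab × Γ)) (M : MSC P Lab) (N : MSC P Γ) : Prop :=
  ∃ γ : ℕ → Γ, N = M.relabel γ ∧ A.Accepts (M.relabel fun e => (M.lab e, γ e))

/-- `M_φ` : the MSC over `Bool` obtained from `M` by labelling each event with
the truth value of the event formula `φ`. -/
noncomputable def MSC.evalEF {P Lab : Type} (M : MSC P Lab) (φ : EF P Lab) : MSC P Bool :=
  M.relabel fun e => @ite Bool (EF.sat M φ e) (Classical.propDecidable _) true false

/-! ## Boolean combinations -/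

/-- Boolean combinations over atoms of type `α`. -/
inductive BC (α : Type) : Type where
  | atom : α → BC α
  | or : BC α → BC α → BC α
  | not : BC α → BC α

/-- Evaluation of a boolean combination given truth values of the atoms. -/
def BC.eval {α : Type} (v : α → Prop) : BC α → Prop
  | .atom a => v a
  | .or b c => BC.eval v b ∨ BC.eval v c
  | .not b => ¬ BC.eval v b

/-- The atoms occurring in a boolean combination. -/
def BC.atoms {α : Type} : BC α → Set α
  | .atom a => {a}
  | .or b c => BC.atoms b ∪ BC.atoms c
  | .not b => BC.atoms b

/-! ## Bounded MSCs -/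

/-- `r` is a linearization of `M`: a total order on the events containing
the happened-before relation. -/
def IsLinearization {P Lab : Type} (M : MSC P Lab) (r : ℕ → ℕ → Prop) : Prop :=
  (∀ e ∈ M.E, r e e) ∧
  (∀ e ∈ M.E, ∀ f ∈ M.E, r e f → r f e → e = f) ∧
  (∀ e ∈ M.E, ∀ f ∈ M.E, ∀ g ∈ M.E, r e f → r f g → r e g) ∧
  (∀ e ∈ M.E, ∀ f ∈ M.E, r e f ∨ r f e) ∧
  (∀ e ∈ M.E, ∀ f ∈ M.E, M.hb e f → r e f)

/-- `r` is a `B`-bounded linearization of `M`: at any point, each channel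
contains at most `B` pending messages. -/
def IsBBoundedLin {P Lab : Type} (M : MSC P Lab) (r : ℕ → ℕ → Prop) (B : ℕ) : Prop :=
  IsLinearization M r ∧
  ∀ g ∈ M.E, ∀ p q : P, p ≠ q →
    Set.ncard {ef : ℕ × ℕ | M.msg ef.1 ef.2 ∧ M.loc ef.1 = p ∧ M.loc ef.2 = q ∧
      r ef.1 g ∧ ¬ r ef.2 g} ≤ B

/-- `M` is `∃B`-bounded: some linearization of `M` is `B`-bounded. -/
def ExistsBBounded {P Lab : Type} (M : MSC P Lab) (B : ℕ) : Prop :=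
  ∃ r : ℕ → ℕ → Prop, IsBBoundedLin M r B

/-- `g` is a send event on channel `(p,q)`. -/
def isSendOn {P Lab : Type} (M : MSC P Lab) (p q : P) (g : ℕ) : Prop :=
  M.loc g = p ∧ ∃ h, M.msg g h ∧ M.loc h = q

/-- `revB M B f g` : `f` is a receive event with matching send `e` on some
channel `(p,q)`, and `g` is the `B`-th send on channel `(p,q)` strictly after `e`. -/
def revB {P Lab : Type} (M : MSC P Lab) (B : ℕ) (f g : ℕ) : Prop :=
  ∃ e, M.msg e f ∧ isSendOn M (M.loc e) (M.loc f) g ∧ M.procLt e g ∧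
    Set.ncard {g' | isSendOn M (M.loc e) (M.loc f) g' ∧ M.procLt e g' ∧ M.procLe g' g} = B

/-- `≤_B = (≤ ∪ rev_B)*`. -/
def leB {P Lab : Type} (M : MSC P Lab) (B : ℕ) : ℕ → ℕ → Prop :=
  Relation.ReflTransGen (fun a b => (M.proc a b ∨ M.msg a b) ∨ revB M B a b)

/-- `<_B`, the strict part of `≤_B`. -/
def ltB {P Lab : Type} (M : MSC P Lab) (B : ℕ) (e f : ℕ) : Prop :=
  leB M B e f ∧ ¬ leB M B f e

/-- `e ∥_B f` : incomparable w.r.t. `≤_B`. -/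
def parB {P Lab : Type} (M : MSC P Lab) (B : ℕ) (e f : ℕ) : Prop :=
  ¬ leB M B e f ∧ ¬ leB M B f e

/-- `↑_B e = {g : e ≤_B g}`. -/
def upB {P Lab : Type} (M : MSC P Lab) (B : ℕ) (e : ℕ) : Set ℕ :=
  {g | leB M B e g}

/-- The order `≺_B` (w.r.t. a fixed total order on `P`): `e ≺_B f` iff `e <_B f`, or
`e ∥_B f` and the `⊑`-minimum of `loc(↑_B e \ ↑_B f)` is strictly below the
`⊑`-minimum of `loc(↑_B f \ ↑_B e)`. -/
def precB {P Lab : Type} [LinearOrder P] (M : MSC P Lab) (B : ℕ) (e f : ℕ) : Prop :=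
  ltB M B e f ∨
    (parB M B e f ∧ ∃ p ∈ M.loc '' (upB M B e \ upB M B f),
      ∀ q ∈ M.loc '' (upB M B f \ upB M B e), p < q)

section Aux

open Relation

variable {P Lab : Type} (M : MSC P Lab)

lemma MSC.loc_eq_of_procLe {e f : ℕ} (h : M.procLe e f) : M.loc e = M.loc f := by
  induction h with
  | refl => rfl
  | tail _ h2 ih => exact ih.trans (M.proc_loc _ _ h2)

lemma MSC.loc_eq_of_procLt {e f : ℕ} (h : M.procLt e f) : M.loc e = M.loc f :=
  M.loc_eq_of_procLe h.to_reflTransGen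

lemma MSC.not_procLt_self (e : ℕ) : ¬ M.procLt e e := fun h =>
  M.acyclic e (Relation.TransGen.mono (fun _ _ hab => Or.inl hab) _ _ h)

lemma MSC.mem_of_procLt {e f : ℕ} (h : M.procLt e f) : e ∈ M.E ∧ f ∈ M.E := by
  induction h with
  | single h => exact M.proc_mem _ _ h
  | tail _ h2 ih => exact ⟨ih.1, (M.proc_mem _ _ h2).2⟩

/-- uniqueness of direct successor -/
lemma MSC.succ_unique {e a b : ℕ} (ha : M.proc e a) (hb : M.proc e b) : a = b := by
  rcases M.proc_total a b (M.proc_mem _ _ ha).2 (M.proc_mem _ _ hb).2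
      ((M.proc_loc _ _ ha).symm.trans (M.proc_loc _ _ hb)) with h | h | h
  · exact h
  · exact absurd ⟨a, Relation.TransGen.single ha, h⟩ (M.proc_cover e b hb)
  · exact absurd ⟨b, Relation.TransGen.single hb, h⟩ (M.proc_cover e a ha)

/-- uniqueness of direct predecessor -/
lemma MSC.pred_unique {e a b : ℕ} (ha : M.proc a e) (hb : M.proc b e) : a = b := by
  rcases M.proc_total a b (M.proc_mem _ _ ha).1 (M.proc_mem _ _ hb).1
      ((M.proc_loc _ _ ha).trans (M.proc_loc _ _ hb).symm) with h | h | h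
  · exact h
  · exact absurd ⟨b, h, Relation.TransGen.single hb⟩ (M.proc_cover a e ha)
  · exact absurd ⟨a, h, Relation.TransGen.single ha⟩ (M.proc_cover b e hb)

/-- if `proc e h` and `e <proc c` then `h ≤proc c` -/
lemma MSC.succ_le {e h c : ℕ} (hh : M.proc e h) (hc : M.procLt e c) : M.procLe h c := by
  obtain ⟨b, hb, hbc⟩ := Relation.TransGen.head'_iff.1 hc
  exact (M.succ_unique hh hb) ▸ hbc

/-- if `proc m f` and `c <proc f` then `c ≤proc m` -/
lemma MSC.le_pred {m f c : ℕ} (hm : M.proc m f) (hc : M.procLt c f) : M.procLe c m := by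
  rcases M.proc_total c m (M.mem_of_procLt hc).1 (M.proc_mem _ _ hm).1
      ((M.loc_eq_of_procLt hc).trans (M.proc_loc _ _ hm).symm) with h | h | h
  · exact h ▸ Relation.ReflTransGen.refl
  · exact h.to_reflTransGen
  · exact absurd ⟨c, h, hc⟩ (M.proc_cover m f hm)

mutual

theorem EF.sat_mem {P Lab : Type} (M : MSC P Lab) :
    ∀ (φ : EF P Lab) (e : ℕ), EF.sat M φ e → e ∈ M.E
  | .proc _, _, h => h.1
  | .lab _, _, h => h.1
  | .or φ ψ, e, h => h.elim (EF.sat_mem M φ e) (EF.sat_mem M ψ e)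
  | .not _, _, h => h.1
  | .dia π φ, e, h => by
      obtain ⟨f, hs, _⟩ := h
      exact (PF.sem_mem M π e f hs).1
  | .loop π, e, h => (PF.sem_mem M π e e h).1

theorem PF.sem_mem {P Lab : Type} (M : MSC P Lab) :
    ∀ (π : PF P Lab) (e f : ℕ), PF.sem M π e f → e ∈ M.E ∧ f ∈ M.E
  | .next, e, f, h => M.proc_mem e f h
  | .prev, e, f, h => ⟨(M.proc_mem f e h).2, (M.proc_mem f e h).1⟩
  | .msg _ _, e, f, h => M.msg_mem e f h.1
  | .msgInv _ _, e, f, h => ⟨(M.msg_mem f e h.1).2, (M.msg_mem f e h.1).1⟩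
  | .nextG _, e, f, h => M.mem_of_procLt h.1
  | .prevG _, e, f, h => ⟨(M.mem_of_procLt h.1).2, (M.mem_of_procLt h.1).1⟩
  | .jump _ _, _, _, h => ⟨h.1, h.2.1⟩
  | .test φ, e, f, h => by
      have := EF.sat_mem M φ e h.2
      exact ⟨this, h.1 ▸ this⟩
  | .comp π₁ π₂, e, f, h => by
      obtain ⟨g, h1, h2⟩ := h
      exact ⟨(PF.sem_mem M π₁ e g h1).1, (PF.sem_mem M π₂ g f h2).2⟩
  | .union π₁ π₂, e, f, h =>
      h.elim (PF.sem_mem M π₁ e f) (PF.sem_mem M π₂ e f)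
  | .inter π₁ π₂, e, f, h => PF.sem_mem M π₁ e f h.1
  | .compl _, _, _, h => ⟨h.1, h.2.1⟩

end

theorem PF.sameLoc {P Lab : Type} (M : MSC P Lab) :
    ∀ (π : PF P Lab), PF.inFrag {PDLOp.loop} π → ∀ e f x y, M.procLe e f →
      PF.sem M π e x → PF.sem M π f y → M.loc x = M.loc y
  | .next, _, e, f, x, y, hef, hx, hy =>
      (M.proc_loc _ _ hx).symm.trans ((M.loc_eq_of_procLe hef).trans (M.proc_loc _ _ hy))
  | .prev, _, e, f, x, y, hef, hx, hy =>
      (M.proc_loc _ _ hx).trans ((M.loc_eq_of_procLe hef).trans (M.proc_loc _ _ hy).symm)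
  | .msg p q, _, e, f, x, y, _, hx, hy => hx.2.2.trans hy.2.2.symm
  | .msgInv p q, _, e, f, x, y, _, hx, hy => hx.2.1.trans hy.2.1.symm
  | .nextG _, _, e, f, x, y, hef, hx, hy =>
      (M.loc_eq_of_procLt hx.1).symm.trans ((M.loc_eq_of_procLe hef).trans (M.loc_eq_of_procLt hy.1))
  | .prevG _, _, e, f, x, y, hef, hx, hy =>
      (M.loc_eq_of_procLt hx.1).trans ((M.loc_eq_of_procLe hef).trans (M.loc_eq_of_procLt hy.1).symm)
  | .jump _ r, _, e, f, x, y, _, hx, hy => hx.2.2.2.trans hy.2.2.2.symm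
  | .test _, _, e, f, x, y, hef, hx, hy =>
      hx.1 ▸ hy.1 ▸ M.loc_eq_of_procLe hef
  | .comp π₁ π₂, hπ, e, f, x, y, hef, hx, hy => by
      obtain ⟨g, hg, hgx⟩ := hx
      obtain ⟨g', hg', hg'y⟩ := hy
      have hloc : M.loc g = M.loc g' := PF.sameLoc M π₁ hπ.1 e f g g' hef hg hg'
      rcases M.proc_total g g' (PF.sem_mem M π₁ e g hg).2 (PF.sem_mem M π₁ f g' hg').2 hloc
          with h | h | h
      · subst h
        exact PF.sameLoc M π₂ hπ.2 g g x y Relation.ReflTransGen.refl hgx hg'y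
      · exact PF.sameLoc M π₂ hπ.2 g g' x y h.to_reflTransGen hgx hg'y
      · exact (PF.sameLoc M π₂ hπ.2 g' g y x h.to_reflTransGen hg'y hgx).symm
  | .union _ _, hπ, _, _, _, _, _, _, _ => absurd hπ.1 (by simp)
  | .inter _ _, hπ, _, _, _, _, _, _, _ => absurd hπ.1 (by simp)
  | .compl _, hπ, _, _, _, _, _, _, _ => absurd hπ.1 (by simp)

/-- The crossing lemma. -/
theorem PF.cross {P Lab : Type} (M : MSC P Lab) :
    ∀ (π : PF P Lab), PF.inFrag {PDLOp.loop} π → ∀ e f x y, M.procLe e f →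
      PF.sem M π e x → PF.sem M π f y → M.procLt y x →
      PF.sem M π e y ∧ PF.sem M π f x
  | .next, _, e, f, x, y, hef, hx, hy, hyx =>
      absurd ⟨y, Relation.TransGen.tail' hef hy, hyx⟩ (M.proc_cover e x hx)
  | .prev, _, e, f, x, y, hef, hx, hy, hyx =>
      absurd ⟨x, hyx, Relation.TransGen.trans_left (Relation.TransGen.single hx) hef⟩
        (M.proc_cover y f hy)
  | .msg p q, _, e, f, x, y, hef, hx, hy, hyx => by
      have hiff := M.fifo e x f y hx.1 hy.1 (hx.2.1.trans hy.2.1.symm)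
        (hx.2.2.trans hy.2.2.symm)
      exact absurd (Relation.TransGen.trans_left hyx (hiff.1 hef))
        (M.not_procLt_self y)
  | .msgInv p q, _, e, f, x, y, hef, hx, hy, hyx => by
      have hiff := M.fifo x e y f hx.1 hy.1 (hx.2.1.trans hy.2.1.symm)
        (hx.2.2.trans hy.2.2.symm)
      exact absurd (Relation.TransGen.trans_left hyx (hiff.2 hef))
        (M.not_procLt_self y)
  | .nextG φ, _, e, f, x, y, hef, hx, hy, hyx => by
      refine ⟨⟨Relation.TransGen.trans_right hef hy.1, fun g hg1 hg2 => ?_⟩,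
        ⟨hy.1.trans hyx, fun g hg1 hg2 => ?_⟩⟩
      · exact hx.2 g hg1 (hg2.trans hyx)
      · exact hx.2 g (Relation.TransGen.trans_right hef hg1) hg2
  | .prevG φ, _, e, f, x, y, hef, hx, hy, hyx => by
      refine ⟨⟨hyx.trans hx.1, fun g hg1 hg2 => ?_⟩,
        ⟨Relation.TransGen.trans_left hx.1 hef, fun g hg1 hg2 => ?_⟩⟩
      · exact hy.2 g hg1 (Relation.TransGen.trans_left hg2 hef)
      · exact hy.2 g (hyx.trans hg1) hg2
  | .jump _ _, _, e, f, x, y, hef, hx, hy, _ =>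
      ⟨⟨hx.1, hy.2.1, hx.2.2.1, hy.2.2.2⟩, ⟨hy.1, hx.2.1, hy.2.2.1, hx.2.2.2⟩⟩
  | .test φ, _, e, f, x, y, hef, hx, hy, hyx => by
      obtain ⟨hx1, -⟩ := hx
      obtain ⟨hy1, -⟩ := hy
      subst hx1; subst hy1
      exact absurd (Relation.TransGen.trans_left hyx hef) (M.not_procLt_self f)
  | .comp π₁ π₂, hπ, e, f, x, y, hef, hx, hy, hyx => by
      obtain ⟨g, hg, hgx⟩ := hx
      obtain ⟨g', hg', hg'y⟩ := hy
      have hloc : M.loc g = M.loc g' := PF.sameLoc M π₁ hπ.1 e f g g' hef hg hg'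
      rcases M.proc_total g g' (PF.sem_mem M π₁ e g hg).2 (PF.sem_mem M π₁ f g' hg').2 hloc
          with h | h | h
      · subst h
        obtain ⟨h1, h2⟩ := PF.cross M π₂ hπ.2 g g x y Relation.ReflTransGen.refl hgx hg'y hyx
        exact ⟨⟨g, hg, h1⟩, ⟨g, hg', h2⟩⟩
      · obtain ⟨h1, h2⟩ := PF.cross M π₂ hπ.2 g g' x y h.to_reflTransGen hgx hg'y hyx
        exact ⟨⟨g, hg, h1⟩, ⟨g', hg', h2⟩⟩
      · obtain ⟨h1, h2⟩ := PF.cross M π₁ hπ.1 e f g g' hef hg hg' h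
        exact ⟨⟨g', h1, hg'y⟩, ⟨g, h2, hgx⟩⟩
  | .union _ _, hπ, _, _, _, _, _, _, _, _ => absurd hπ.1 (by simp)
  | .inter _ _, hπ, _, _, _, _, _, _, _, _ => absurd hπ.1 (by simp)
  | .compl _, hπ, _, _, _, _, _, _, _, _ => absurd hπ.1 (by simp)

/-- a nonempty finite set totally preordered by `r` has a greatest element -/
theorem finset_exists_max {r : ℕ → ℕ → Prop} (hrefl : ∀ x, r x x)
    (htrans : ∀ a b c, r a b → r b c → r a c) :
    ∀ (s : Finset ℕ), s.Nonempty → (∀ x ∈ s, ∀ y ∈ s, r x y ∨ r y x) →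
      ∃ m ∈ s, ∀ x ∈ s, r x m := by
  intro s
  induction s using Finset.induction_on with
  | empty => intro h; exact absurd h (by simp)
  | @insert a s _ ih =>
    intro _ htot
    by_cases hs : s.Nonempty
    · obtain ⟨m, hm, hmax⟩ := ih hs
        (fun x hx y hy => htot x (Finset.mem_insert_of_mem hx) y (Finset.mem_insert_of_mem hy))
      rcases htot a (Finset.mem_insert_self a s) m (Finset.mem_insert_of_mem hm) with h | h
      · exact ⟨m, Finset.mem_insert_of_mem hm, fun x hx =>
          (Finset.mem_insert.1 hx).elim (fun hxa => hxa ▸ h) (hmax x)⟩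
      · exact ⟨a, Finset.mem_insert_self a s, fun x hx =>
          (Finset.mem_insert.1 hx).elim (fun hxa => hxa ▸ hrefl a)
            (fun hxs => htrans _ _ _ (hmax x hxs) h)⟩
    · rw [Finset.not_nonempty_iff_eq_empty] at hs
      subst hs
      exact ⟨a, Finset.mem_insert_self a ∅, fun x hx => by
        simp only [Finset.mem_insert, Finset.notMem_empty, or_false] at hx
        exact hx ▸ hrefl a⟩

end Aux

/-- existence of min and max of `⟦π⟧(e)` when nonempty, for `PDLsf[Loop]`. -/
theorem exists_min_max {P Lab : Type} (M : MSC P Lab) (π : PF P Lab)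
    (hπ : PF.inFrag {PDLOp.loop} π) (e : ℕ) (hne : ∃ g, PF.sem M π e g) :
    (∃ m, isMinOf M π e m) ∧ (∃ m, isMaxOf M π e m) := by
  classical
  obtain ⟨g, hg⟩ := hne
  have hcomp : ∀ x y, PF.sem M π e x → PF.sem M π e y → M.procLe x y ∨ M.procLe y x := by
    intro x y hx hy
    have hloc : M.loc x = M.loc y :=
      PF.sameLoc M π hπ e e x y Relation.ReflTransGen.refl hx hy
    rcases M.proc_total x y (PF.sem_mem M π e x hx).2 (PF.sem_mem M π e y hy).2 hloc
        with h | h | h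
    · exact Or.inl (h ▸ Relation.ReflTransGen.refl)
    · exact Or.inl h.to_reflTransGen
    · exact Or.inr h.to_reflTransGen
  set s : Finset ℕ := M.E.filter (fun x => PF.sem M π e x) with hs
  have hmem : ∀ x, x ∈ s ↔ PF.sem M π e x := by
    intro x
    simp only [hs, Finset.mem_filter, and_iff_right_iff_imp]
    exact fun h => (PF.sem_mem M π e x h).2
  have hsne : s.Nonempty := ⟨g, (hmem g).2 hg⟩
  constructor
  · obtain ⟨m, hm, hmax⟩ := finset_exists_max (r := fun a b => M.procLe b a)
      (fun x => Relation.ReflTransGen.refl)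
      (fun a b c hab hbc => Relation.ReflTransGen.trans hbc hab) s hsne
      (fun x hx y hy => (hcomp y x ((hmem y).1 hy) ((hmem x).1 hx)))
    exact ⟨m, (hmem m).1 hm, fun x hx => hmax x ((hmem x).2 hx)⟩
  · obtain ⟨m, hm, hmax⟩ := finset_exists_max (r := M.procLe)
      (fun x => Relation.ReflTransGen.refl)
      (fun a b c hab hbc => Relation.ReflTransGen.trans hab hbc) s hsne
      (fun x hx y hy => hcomp x y ((hmem x).1 hx) ((hmem y).1 hy))
    exact ⟨m, (hmem m).1 hm, fun x hx => hmax x ((hmem x).2 hx)⟩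

/-- Every `PDLsf[Loop]` path formula is monotone: for events
`e ≤proc f` on which `⟦π⟧` is nonempty, the minima and maxima exist and satisfy
`min_π(e) ≤proc min_π(f)` and `max_π(e) ≤proc max_π(f)`. -/
theorem pdlsf_loop_monotone {P Lab : Type}
    [Fintype P] [Nonempty P] [Fintype Lab] [Nonempty Lab]
    (π : PF P Lab) (hπ : PF.inFrag {PDLOp.loop} π)
    (M : MSC P Lab) (e f : ℕ) (hef : M.procLe e f)
    (he : ∃ g, PF.sem M π e g) (hf : ∃ g, PF.sem M π f g) :
    (∃ me, isMinOf M π e me) ∧ (∃ mf, isMinOf M π f mf) ∧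
    (∃ me, isMaxOf M π e me) ∧ (∃ mf, isMaxOf M π f mf) ∧
    (∀ me mf, isMinOf M π e me → isMinOf M π f mf → M.procLe me mf) ∧
    (∀ me mf, isMaxOf M π e me → isMaxOf M π f mf → M.procLe me mf) := by
  refine ⟨(exists_min_max M π hπ e he).1, (exists_min_max M π hπ f hf).1,
    (exists_min_max M π hπ e he).2, (exists_min_max M π hπ f hf).2, ?_, ?_⟩
  · intro me mf hme hmf
    have hloc : M.loc me = M.loc mf := PF.sameLoc M π hπ e f me mf hef hme.1 hmf.1
    rcases M.proc_total me mf (PF.sem_mem M π e me hme.1).2 (PF.sem_mem M π f mf hmf.1).2 hloc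
        with h | h | h
    · exact h ▸ Relation.ReflTransGen.refl
    · exact h.to_reflTransGen
    · exact hme.2 mf (PF.cross M π hπ e f me mf hef hme.1 hmf.1 h).1
  · intro me mf hme hmf
    have hloc : M.loc me = M.loc mf := PF.sameLoc M π hπ e f me mf hef hme.1 hmf.1
    rcases M.proc_total me mf (PF.sem_mem M π e me hme.1).2 (PF.sem_mem M π f mf hmf.1).2 hloc
        with h | h | h
    · exact h ▸ Relation.ReflTransGen.refl
    · exact h.to_reflTransGen
    · exact hmf.2 me (PF.cross M π hπ e f me mf hef hme.1 hmf.1 h).2
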